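/- arXiv:1304.4404 — 3 statements merged into one kernel-verified Lean document; each statement's English description precedes it below -/
import Mathlib

section
/- For every natural number r and all natural numbers k, i with 0 ≤ k ≤ i ≤ r, the integer T(r,i,k) := ∑_{j=k}^{i} (-1)^{j+k} · C(r-j, i-j) · C(r+1-k, j-k) equals (-1)^{i+k}. (Here C(a,b) denotes the binomial coefficient.) -/
lemma auxA (s n : ℕ) (hn : n ≠ 0) (hns : n ≤ s) :
    ∑ m ∈ Finset.range (n + 1),
      (-1 : ℤ) ^ m * (s.choose m) * ((s - m).choose (n - m)) = 0 := by
  have key : ∀ m ∈ Finset.range (n + 1),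
      (-1 : ℤ) ^ m * (s.choose m) * ((s - m).choose (n - m))
        = (s.choose n : ℤ) * ((-1 : ℤ) ^ m * (n.choose m)) := by
    intro m hm
    rw [Finset.mem_range, Nat.lt_succ_iff] at hm
    have h := Nat.choose_mul (n := s) (k := n) hm
    have h' : (s.choose n : ℤ) * (n.choose m) = (s.choose m : ℤ) * ((s - m).choose (n - m)) := by
      exact_mod_cast congrArg (Nat.cast : ℕ → ℤ) h
    linear_combination ((-1 : ℤ) ^ m) * h'.symm
  rw [Finset.sum_congr rfl key, ← Finset.mul_sum,
    Int.alternating_sum_range_choose_of_ne hn, mul_zero]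

lemma auxS : ∀ s n : ℕ, n ≤ s →
    ∑ m ∈ Finset.range (n + 1),
      (-1 : ℤ) ^ m * ((s + 1).choose m) * ((s - m).choose (n - m)) = (-1) ^ n := by
  intro s n
  induction n generalizing s with
  | zero => simp
  | succ n ih =>
    intro hns
    obtain ⟨t, rfl⟩ : ∃ t, s = t + 1 := ⟨s - 1, by omega⟩
    rw [Finset.sum_range_succ']
    have key : ∀ m ∈ Finset.range (n + 1),
        (-1 : ℤ) ^ (m + 1) * ((t + 1 + 1).choose (m + 1)) * ((t + 1 - (m + 1)).choose (n + 1 - (m + 1)))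
        = -((-1 : ℤ) ^ m * ((t + 1).choose m) * ((t - m).choose (n - m)))
          + (-1 : ℤ) ^ (m + 1) * ((t + 1).choose (m + 1)) * ((t + 1 - (m + 1)).choose (n + 1 - (m + 1))) := by
      intro m hm
      have e2 : t + 1 - (m + 1) = t - m := by omega
      have e3 : n + 1 - (m + 1) = n - m := by omega
      rw [Nat.choose_succ_succ (t + 1) m, e2, e3]
      push_cast
      ring
    rw [Finset.sum_congr rfl key, Finset.sum_add_distrib, Finset.sum_neg_distrib,
      ih t (by omega)]
    have hA := auxA (t + 1) (n + 1) (by omega) (by omega)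
    rw [Finset.sum_range_succ'] at hA
    simp only [Nat.choose_zero_right, Nat.cast_one, pow_zero, one_mul, mul_one, Nat.sub_zero] at hA ⊢
    linear_combination hA

/-- For every natural number `r` and all naturals `k ≤ i ≤ r`, the integer
`T(r,i,k) = ∑_{j=k}^{i} (-1)^{j+k} · C(r-j, i-j) · C(r+1-k, j-k)` equals `(-1)^{i+k}`. -/
theorem binomial_identity_T (r i k : ℕ) (hki : k ≤ i) (hir : i ≤ r) :
    ∑ j ∈ Finset.Icc k i,
      (-1 : ℤ) ^ (j + k) * ((r - j).choose (i - j)) * ((r + 1 - k).choose (j - k))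
      = (-1 : ℤ) ^ (i + k) := by
  have hIcc : Finset.Icc k i = Finset.map ⟨fun m => k + m, add_right_injective k⟩
      (Finset.range (i - k + 1)) := by
    ext j
    simp only [Finset.mem_map, Finset.mem_Icc, Finset.mem_range,
      Function.Embedding.coeFn_mk]
    constructor
    · rintro ⟨h1, h2⟩; exact ⟨j - k, by omega, by omega⟩
    · rintro ⟨m, hm, rfl⟩; omega
  rw [hIcc, Finset.sum_map]
  simp only [Function.Embedding.coeFn_mk]
  have step : ∀ m ∈ Finset.range (i - k + 1),
      (-1 : ℤ) ^ (k + m + k) * ((r - (k + m)).choose (i - (k + m)))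
        * ((r + 1 - k).choose (k + m - k))
      = (-1 : ℤ) ^ m * (((r - k) + 1).choose m) * (((r - k) - m).choose ((i - k) - m)) := by
    intro m hm
    have e1 : r - (k + m) = (r - k) - m := by omega
    have e2 : i - (k + m) = (i - k) - m := by omega
    have e3 : k + m - k = m := by omega
    have e4 : (-1 : ℤ) ^ (k + m + k) = (-1) ^ m := by
      rw [show k + m + k = m + 2 * k by ring, pow_add, pow_mul]
      simp
    have e5 : r + 1 - k = (r - k) + 1 := by omega
    rw [e1, e2, e3, e4, e5]
    ring
  rw [Finset.sum_congr rfl step, auxS (r - k) (i - k) (by omega)]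
  rw [show i + k = (i - k) + 2 * k by omega, pow_add, pow_mul]
  simp
end

section
/- For every natural number r and all natural numbers k, i with 0 ≤ k ≤ i < r, one has T(r, i+1, k+1) = T(r, i, k), where T(r,i,k) := ∑_{j=k}^{i} (-1)^{j+k} · C(r-j, i-j) · C(r+1-k, j-k). -/
private def U (s n m : ℕ) : ℕ :=
  if 1 ≤ m ∧ m ≤ n then (s - m).choose (n - m) * s.choose (m - 1) else 0

private lemma termwise (s n m : ℕ) (hns : n < s) (hm : m ≤ n) :
    (s - m).choose (n - m) * (s + 1).choose m
      = (s - 1 - m).choose (n - m) * s.choose m + (U s n m + U s n (m + 1)) := by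
  rcases Nat.eq_zero_or_pos m with rfl | hm1
  · have h0 : U s n 0 = 0 := by unfold U; rw [if_neg (by omega)]
    rcases Nat.eq_zero_or_pos n with rfl | hn1
    · have h1 : U s 0 1 = 0 := by unfold U; rw [if_neg (by omega)]
      simp [h0, h1]
    · obtain ⟨n', rfl⟩ : ∃ n', n = n' + 1 := ⟨n - 1, by omega⟩
      obtain ⟨s', rfl⟩ : ∃ s', s = s' + 2 := ⟨s - 2, by omega⟩
      have h1 : U (s' + 2) (n' + 1) 1 = (s' + 1).choose n' := by
        unfold U
        have hcond : 1 ≤ 1 ∧ 1 ≤ n' + 1 := ⟨le_refl 1, by omega⟩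
        rw [if_pos hcond]
        have e1 : s' + 2 - 1 = s' + 1 := by omega
        have e2 : n' + 1 - 1 = n' := by omega
        rw [e1, e2]; simp
      rw [h0, h1]
      have e3 : s' + 2 - 0 = s' + 2 := by omega
      have e4 : n' + 1 - 0 = n' + 1 := by omega
      have e5 : s' + 2 - 1 - 0 = s' + 1 := by omega
      rw [e3, e4, e5]
      simp [Nat.choose_succ_succ]
      ring
  · obtain ⟨m', rfl⟩ : ∃ m', m = m' + 1 := ⟨m - 1, by omega⟩
    rcases eq_or_lt_of_le hm with rfl | hmn
    · -- m = n
      obtain ⟨a, rfl⟩ : ∃ a, s = (m' + 1) + a + 1 := ⟨s - m' - 2, by omega⟩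
      have hu1 : U (m' + 1 + a + 1) (m' + 1) (m' + 1)
          = (a + 1).choose 0 * (m' + 1 + a + 1).choose m' := by
        unfold U
        have hcond : 1 ≤ m' + 1 ∧ m' + 1 ≤ m' + 1 := ⟨by omega, by omega⟩
        rw [if_pos hcond]
        have e1 : m' + 1 + a + 1 - (m' + 1) = a + 1 := by omega
        have e2 : m' + 1 - (m' + 1) = 0 := by omega
        have e3 : m' + 1 - 1 = m' := by omega
        rw [e1, e2, e3]
      have hu2 : U (m' + 1 + a + 1) (m' + 1) (m' + 1 + 1) = 0 := by
        unfold U; rw [if_neg (by omega)]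
      rw [hu1, hu2]
      have e1 : m' + 1 + a + 1 - (m' + 1) = a + 1 := by omega
      have e2 : m' + 1 - (m' + 1) = 0 := by omega
      have e3 : m' + 1 + a + 1 - 1 - (m' + 1) = a := by omega
      rw [e1, e2, e3]
      rw [Nat.choose_succ_succ (m' + 1 + a + 1) m']
      simp
      ring
    · -- m < n
      obtain ⟨b, rfl⟩ : ∃ b, n = (m' + 1) + b + 1 := ⟨n - m' - 2, by omega⟩
      obtain ⟨a, rfl⟩ : ∃ a, s = (m' + 1) + b + a + 2 := ⟨s - m' - b - 3, by omega⟩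
      have hcond1 : 1 ≤ m' + 1 ∧ m' + 1 ≤ m' + 1 + b + 1 := ⟨by omega, by omega⟩
      have hcond2 : 1 ≤ m' + 1 + 1 ∧ m' + 1 + 1 ≤ m' + 1 + b + 1 := ⟨by omega, by omega⟩
      have hu1 : U (m' + 1 + b + a + 2) (m' + 1 + b + 1) (m' + 1)
          = (b + a + 2).choose (b + 1) * (m' + 1 + b + a + 2).choose m' := by
        unfold U
        rw [if_pos hcond1]
        have e1 : m' + 1 + b + a + 2 - (m' + 1) = b + a + 2 := by omega
        have e2 : m' + 1 + b + 1 - (m' + 1) = b + 1 := by omega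
        have e3 : m' + 1 - 1 = m' := by omega
        rw [e1, e2, e3]
      have hu2 : U (m' + 1 + b + a + 2) (m' + 1 + b + 1) (m' + 1 + 1)
          = (b + a + 1).choose b * (m' + 1 + b + a + 2).choose (m' + 1) := by
        unfold U
        rw [if_pos hcond2]
        have e1 : m' + 1 + b + a + 2 - (m' + 1 + 1) = b + a + 1 := by omega
        have e2 : m' + 1 + b + 1 - (m' + 1 + 1) = b := by omega
        have e3 : m' + 1 + 1 - 1 = m' + 1 := by omega
        rw [e1, e2, e3]
      rw [hu1, hu2]
      have e1 : m' + 1 + b + a + 2 - (m' + 1) = b + a + 2 := by omega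
      have e2 : m' + 1 + b + 1 - (m' + 1) = b + 1 := by omega
      have e3 : m' + 1 + b + a + 2 - 1 - (m' + 1) = b + a + 1 := by omega
      rw [e1, e2, e3]
      rw [Nat.choose_succ_succ (m' + 1 + b + a + 2) m',
        Nat.choose_succ_succ (b + a + 1) b]
      ring

private lemma key (s n : ℕ) (hns : n < s) :
    ∑ m ∈ Finset.range (n + 1), (-1 : ℤ) ^ m * ((s - 1 - m).choose (n - m)) * (s.choose m)
      = ∑ m ∈ Finset.range (n + 1),
          (-1 : ℤ) ^ m * ((s - m).choose (n - m)) * ((s + 1).choose m) := by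
  have hU0 : U s n 0 = 0 := by unfold U; rw [if_neg (by omega)]
  have hUn : U s n (n + 1) = 0 := by unfold U; rw [if_neg (by omega)]
  have tele : ∑ m ∈ Finset.range (n + 1),
      ((-1 : ℤ) ^ m * (U s n m : ℤ) - (-1 : ℤ) ^ (m + 1) * (U s n (m + 1) : ℤ)) = 0 := by
    rw [Finset.sum_range_sub' (fun m => (-1 : ℤ) ^ m * (U s n m : ℤ))]
    simp [hU0, hUn]
  have hterm : ∀ m ∈ Finset.range (n + 1),
      (-1 : ℤ) ^ m * ((s - m).choose (n - m)) * ((s + 1).choose m)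
        = (-1 : ℤ) ^ m * ((s - 1 - m).choose (n - m)) * (s.choose m)
          + ((-1 : ℤ) ^ m * (U s n m : ℤ) - (-1 : ℤ) ^ (m + 1) * (U s n (m + 1) : ℤ)) := by
    intro m hm
    rw [Finset.mem_range] at hm
    have hc : ((s - m).choose (n - m) * (s + 1).choose m : ℤ)
        = (((s - 1 - m).choose (n - m) * s.choose m + (U s n m + U s n (m + 1)) : ℕ) : ℤ) := by
      exact_mod_cast congrArg (Nat.cast : ℕ → ℤ) (termwise s n m hns (by omega))
    push_cast at hc
    rw [pow_succ]
    linear_combination ((-1 : ℤ) ^ m) * hc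
  rw [Finset.sum_congr rfl hterm, Finset.sum_add_distrib, tele, add_zero]

/-- Shift invariance of `T(r,i,k)`: for all naturals `k ≤ i < r`,
`T(r, i+1, k+1) = T(r, i, k)`, where
`T(r,i,k) = ∑_{j=k}^{i} (-1)^{j+k} · C(r-j, i-j) · C(r+1-k, j-k)`. -/
theorem binomial_identity_T_shift (r i k : ℕ) (hki : k ≤ i) (hir : i < r) :
    ∑ j ∈ Finset.Icc (k + 1) (i + 1),
      (-1 : ℤ) ^ (j + (k + 1)) * ((r - j).choose (i + 1 - j)) *
        ((r + 1 - (k + 1)).choose (j - (k + 1)))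
      = ∑ j ∈ Finset.Icc k i,
          (-1 : ℤ) ^ (j + k) * ((r - j).choose (i - j)) * ((r + 1 - k).choose (j - k)) := by
  set n := i - k with hn
  set s := r - k with hs
  have hns : n < s := by omega
  have hL : ∑ j ∈ Finset.Icc (k + 1) (i + 1),
      (-1 : ℤ) ^ (j + (k + 1)) * ((r - j).choose (i + 1 - j)) *
        ((r + 1 - (k + 1)).choose (j - (k + 1)))
      = ∑ m ∈ Finset.range (n + 1),
          (-1 : ℤ) ^ m * ((s - 1 - m).choose (n - m)) * (s.choose m) := by
    rw [← Finset.Ico_add_one_right_eq_Icc, Finset.sum_Ico_eq_sum_range]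
    have hcard : i + 1 + 1 - (k + 1) = n + 1 := by omega
    rw [hcard]
    refine Finset.sum_congr rfl fun m hm => ?_
    rw [Finset.mem_range] at hm
    have e1 : r - (k + 1 + m) = s - 1 - m := by omega
    have e2 : i + 1 - (k + 1 + m) = n - m := by omega
    have e3 : r + 1 - (k + 1) = s := by omega
    have e4 : k + 1 + m - (k + 1) = m := by omega
    rw [e1, e2, e3, e4]
    have esign : (-1 : ℤ) ^ (k + 1 + m + (k + 1)) = (-1 : ℤ) ^ m := by
      have : k + 1 + m + (k + 1) = m + 2 * (k + 1) := by ring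
      rw [this, pow_add, pow_mul]
      norm_num
    rw [esign]
  have hR : ∑ j ∈ Finset.Icc k i,
      (-1 : ℤ) ^ (j + k) * ((r - j).choose (i - j)) * ((r + 1 - k).choose (j - k))
      = ∑ m ∈ Finset.range (n + 1),
          (-1 : ℤ) ^ m * ((s - m).choose (n - m)) * ((s + 1).choose m) := by
    rw [← Finset.Ico_add_one_right_eq_Icc, Finset.sum_Ico_eq_sum_range]
    have hcard : i + 1 - k = n + 1 := by omega
    rw [hcard]
    refine Finset.sum_congr rfl fun m hm => ?_
    rw [Finset.mem_range] at hm
    have e1 : r - (k + m) = s - m := by omega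
    have e2 : i - (k + m) = n - m := by omega
    have e3 : r + 1 - k = s + 1 := by omega
    have e4 : k + m - k = m := by omega
    rw [e1, e2, e3, e4]
    have esign : (-1 : ℤ) ^ (k + m + k) = (-1 : ℤ) ^ m := by
      have : k + m + k = m + 2 * k := by ring
      rw [this, pow_add, pow_mul]
      norm_num
    rw [esign]
  rw [hL, hR]
  exact key s n hns
end

section
/- Let R be a commutative ring, r ≥ 1 a natural number, c : ℕ → R with c(0) = 1, and define τ : ℕ → ℕ → R by: τ(0,j) = 1 if j = 0 and τ(0,j) = 0 otherwise; τ(i+1, j) = 0 for j > r; and τ(i+1, j) = τ(i, j-1) − c(r+1−j)·τ(i, r) for 0 ≤ j ≤ r, where τ(i, j-1) is interpreted as 0 when j = 0. Then for every l ∈ R and all natural numbers j, k: ∑_{i=0}^{j-1} (−1)^i · l^i · ( τ(k+j−i−1, r−1) + τ(k+j−i−1, r)·(l − c(1)) ) = τ(k+j, r) − (−1)^j · l^j · τ(k, r). -/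
/-- Let `R` be a commutative ring, `r ≥ 1`, `c : ℕ → R` with `c 0 = 1`, and let
`τ : ℕ → ℕ → R` be defined by `τ 0 j = δ_{0,j}`, `τ (i+1) j = 0` for `j > r`, and
`τ (i+1) j = τ i (j-1) - c (r+1-j) · τ i r` for `0 ≤ j ≤ r` (with `τ i (j-1)` read as `0`
when `j = 0`).  Then for every `l ∈ R` and all naturals `j, k`:
`∑_{i=0}^{j-1} (-1)^i l^i (τ(k+j-i-1, r-1) + τ(k+j-i-1, r)·(l - c 1))
  = τ(k+j, r) - (-1)^j l^j τ(k, r)`. -/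
theorem telescoping_identity (R : Type*) [CommRing R] (r : ℕ) (hr : 1 ≤ r)
    (c : ℕ → R) (hc0 : c 0 = 1)
    (τ : ℕ → ℕ → R)
    (hτ0 : ∀ j, τ 0 j = if j = 0 then 1 else 0)
    (hτgt : ∀ i j, r < j → τ (i + 1) j = 0)
    (hτrec : ∀ i j, j ≤ r →
      τ (i + 1) j = (if j = 0 then 0 else τ i (j - 1)) - c (r + 1 - j) * τ i r)
    (l : R) (j k : ℕ) :
    ∑ i ∈ Finset.range j,
        (-1 : R) ^ i * l ^ i *
          (τ (k + j - i - 1) (r - 1) + τ (k + j - i - 1) r * (l - c 1))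
      = τ (k + j) r - (-1 : R) ^ j * l ^ j * τ k r := by
  have hrec : ∀ n, τ (n + 1) r = τ n (r - 1) - c 1 * τ n r := by
    intro n
    have h := hτrec n r le_rfl
    have hr0 : r ≠ 0 := by omega
    have : r + 1 - r = 1 := by omega
    simpa [hr0, this] using h
  induction j generalizing k with
  | zero => simp
  | succ j ih =>
    rw [Finset.sum_range_succ]
    have h1 : ∀ i ∈ Finset.range j,
        (-1 : R) ^ i * l ^ i *
          (τ (k + (j + 1) - i - 1) (r - 1) + τ (k + (j + 1) - i - 1) r * (l - c 1))
        = (-1 : R) ^ i * l ^ i *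
          (τ (k + 1 + j - i - 1) (r - 1) + τ (k + 1 + j - i - 1) r * (l - c 1)) := by
      intro i hi
      have : k + (j + 1) - i - 1 = k + 1 + j - i - 1 := by omega
      rw [this]
    rw [Finset.sum_congr rfl h1, ih (k + 1)]
    have h2 : k + (j + 1) - j - 1 = k := by omega
    have h3 : k + 1 + j = k + (j + 1) := by omega
    rw [h2, h3]
    have h4 : τ (k + 1) r = τ k (r - 1) - c 1 * τ k r := hrec k
    have h5 : τ k (r - 1) = τ (k + 1) r + c 1 * τ k r := by rw [h4]; ring
    rw [h5]
    ring
end
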